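/- Let C be a category and F : C → Set a pro-representable functor such that every arrow of C is a strict epimorphism, F X is nonempty for every X, and F preserves strict epimorphisms. Then F is faithful and reflects isomorphisms. -/

import Mathlib

open CategoryTheory

universe v u

/-- Grothendieck strict epimorphism. -/
def IsStrictEpi {C : Type u} [Category.{v} C] {X Y : C} (f : X ⟶ Y) : Prop :=
  ∀ {Z : C} (g : X ⟶ Z),
    (∀ {W : C} (s t : W ⟶ X), s ≫ f = t ≫ f → s ≫ g = t ≫ g) →
    ∃! h : Y ⟶ Z, f ≫ h = g

/-- A pro-representable functor (cofiltered category of elements) on a category where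
every arrow is a strict epimorphism, with all `F X` nonempty, which preserves strict
epimorphisms, is faithful and reflects isomorphisms. -/
theorem stmt6 {C : Type u} [Category.{v} C] (F : C ⥤ Type v)
    (hpro : IsCofiltered F.Elements)
    (h1 : ∀ {X Y : C} (f : X ⟶ Y), IsStrictEpi f)
    (h2 : ∀ X : C, Nonempty (F.obj X))
    (h3 : ∀ {X Y : C} (f : X ⟶ Y), IsStrictEpi f →
      IsStrictEpi (C := Type v) (X := F.obj X) (Y := F.obj Y) (F.map f)) :
    (∀ (X Y : C) (f g : X ⟶ Y), F.map f = F.map g → f = g) ∧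
    (∀ (X Y : C) (f : X ⟶ Y), Function.Bijective (F.map f) → IsIso f) := by
  -- Every arrow is epi (strict epis are epis).
  have epi : ∀ {X Y : C} (f : X ⟶ Y) {Z : C} (u v : Y ⟶ Z), f ≫ u = f ≫ v → u = v := by
    intro X Y f Z u v huv
    obtain ⟨h, hh, uniq⟩ := h1 f (f ≫ u)
      (fun s t hst => by rw [← Category.assoc, ← Category.assoc, hst])
    exact (uniq u rfl).trans (uniq v huv.symm).symm
  have faithful : ∀ (X Y : C) (f g : X ⟶ Y), F.map f = F.map g → f = g := by
    intro X Y f g hfg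
    obtain ⟨x⟩ := h2 X
    let fe : F.elementsMk X x ⟶ F.elementsMk Y (F.map f x) := ⟨f, rfl⟩
    let ge : F.elementsMk X x ⟶ F.elementsMk Y (F.map f x) := ⟨g, by rw [← hfg]⟩
    haveI := hpro
    have he := IsCofiltered.eq_condition fe ge
    have h' : (IsCofiltered.eqHom fe ge).val ≫ f = (IsCofiltered.eqHom fe ge).val ≫ g :=
      congrArg Subtype.val he
    exact epi (IsCofiltered.eqHom fe ge).val f g h'
  refine ⟨faithful, ?_⟩
  intro X Y f hbij
  have mono : ∀ {W : C} (s t : W ⟶ X), s ≫ f = t ≫ f → s = t := by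
    intro W s t hst
    apply faithful
    have hc : F.map s ≫ F.map f = F.map t ≫ F.map f := by
      rw [← F.map_comp, ← F.map_comp, hst]
    ext a
    exact hbij.injective (by simpa using congrArg (fun (k : F.obj W ⟶ F.obj Y) => k a) hc)
  obtain ⟨h, hh, -⟩ := h1 f (𝟙 X) (fun s t hst => by rw [mono s t hst])
  have hr : h ≫ f = 𝟙 Y := epi f _ _ (by
    rw [← Category.assoc, hh, Category.id_comp, Category.comp_id])
  exact ⟨h, hh, hr⟩
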